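/- (Cube cliques.) Let h ≥ 1 be an integer and let s be a point of the (n,d)-board with s_i + h ≤ n for all i. Then the 2^d points {(s_1 + a_1·h, …, s_d + a_d·h) : a ∈ {0,1}^d} pairwise attack each other; moreover, if h is even, the center point (s_1 + h/2, …, s_d + h/2) attacks all 2^d of these points. Consequently, every non-attacking set of queens on the (n,d)-board contains at most one of these 2^d points (at most one of the 2^d + 1 points when h is even). -/
import Mathlib


/-- A point `q` lies on the `(n,d)`-board, i.e. all coordinates are in `{1,…,n}`. -/
def onBoard (n d : ℕ) (q : Fin d → ℕ) : Prop :=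
  ∀ i, 1 ≤ q i ∧ q i ≤ n

/-- Queen `a` attacks queen `b`: there are an integer `m` and a nonzero vector
`ε ∈ {-1,0,1}^d` with `a i = ε i * m + b i` for all `i`. -/
def attacks {d : ℕ} (a b : Fin d → ℕ) : Prop :=
  ∃ (m : ℤ) (ε : Fin d → ℤ), (∀ i, ε i = -1 ∨ ε i = 0 ∨ ε i = 1) ∧ ε ≠ 0 ∧
    ∀ i, (a i : ℤ) = ε i * m + (b i : ℤ)

/-- A set of queens is non-attacking if no two distinct members attack each other. -/
def nonAttacking {d : ℕ} (Q : Finset (Fin d → ℕ)) : Prop :=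
  ∀ a ∈ Q, ∀ b ∈ Q, a ≠ b → ¬ attacks a b

/-- A partial solution on the `(n,d)`-board: a non-attacking set fitting the board. -/
def isPartial (n d : ℕ) (Q : Finset (Fin d → ℕ)) : Prop :=
  (∀ q ∈ Q, onBoard n d q) ∧ nonAttacking Q

/-- A solution to the `(n,d)`-queens problem: a non-attacking set of `n^(d-1)` queens. -/
def isSolution (n d : ℕ) (Q : Finset (Fin d → ℕ)) : Prop :=
  isPartial n d Q ∧ Q.card = n ^ (d - 1)

/-- The `(n,d)`-board as a finite set. -/
def boardFinset (n d : ℕ) : Finset (Fin d → ℕ) :=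
  Fintype.piFinset fun _ => Finset.Icc 1 n

/-- `Qmax n d` : the maximum cardinality of a non-attacking set on the `(n,d)`-board. -/
noncomputable def Qmax (n d : ℕ) : ℕ :=
  sSup {k | ∃ Q : Finset (Fin d → ℕ), isPartial n d Q ∧ Q.card = k}

open scoped Classical in
/-- Cube cliques: for `h ≥ 1` and a board point `s` with `s i + h ≤ n` for all `i`,
the `2^d` points `(s₁ + a₁·h, …, s_d + a_d·h)`, `a ∈ {0,1}^d`, pairwise attack each
other; if `h` is even, the center `(s₁ + h/2, …, s_d + h/2)` attacks all of them.
Consequently every non-attacking set on the `(n,d)`-board contains at most one of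
these `2^d` points (at most one of the `2^d + 1` points when `h` is even). -/
theorem cube_cliques (n d h : ℕ) (hd : 1 ≤ d) (hh : 1 ≤ h)
    (s : Fin d → ℕ) (hs : onBoard n d s) (hsh : ∀ i, s i + h ≤ n) :
    (∀ a b : Fin d → ℕ, (∀ i, a i ≤ 1) → (∀ i, b i ≤ 1) → a ≠ b →
      attacks (fun i => s i + a i * h) (fun i => s i + b i * h)) ∧
    (Even h → ∀ a : Fin d → ℕ, (∀ i, a i ≤ 1) →
      attacks (fun i => s i + h / 2) (fun i => s i + a i * h)) ∧
    (∀ Q : Finset (Fin d → ℕ), isPartial n d Q →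
      (Q.filter (fun q => ∃ a : Fin d → ℕ, (∀ i, a i ≤ 1) ∧
        q = fun i => s i + a i * h)).card ≤ 1) ∧
    (Even h → ∀ Q : Finset (Fin d → ℕ), isPartial n d Q →
      (Q.filter (fun q => (q = fun i => s i + h / 2) ∨
        ∃ a : Fin d → ℕ, (∀ i, a i ≤ 1) ∧ q = fun i => s i + a i * h)).card ≤ 1) := by
  have key1 : ∀ a b : Fin d → ℕ, (∀ i, a i ≤ 1) → (∀ i, b i ≤ 1) → a ≠ b →
      attacks (fun i => s i + a i * h) (fun i => s i + b i * h) := by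
    intro a b ha hb hab
    refine ⟨(h : ℤ), fun i => (a i : ℤ) - b i, ?_, ?_, ?_⟩
    · intro i
      dsimp only
      have := ha i; have := hb i; omega
    · obtain ⟨i, hi⟩ := Function.ne_iff.mp hab
      intro h0
      have := congrFun h0 i
      simp at this
      exact hi (by omega)
    · intro i
      push_cast
      ring
  have key2 : Even h → ∀ a : Fin d → ℕ, (∀ i, a i ≤ 1) →
      attacks (fun i => s i + h / 2) (fun i => s i + a i * h) := by
    intro heven a ha
    obtain ⟨k, hk⟩ := heven
    refine ⟨(k : ℤ), fun i => 1 - 2 * (a i : ℤ), ?_, ?_, ?_⟩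
    · intro i
      dsimp only
      have := ha i; omega
    · intro h0
      have := congrFun h0 ⟨0, hd⟩
      simp at this
      have := ha ⟨0, hd⟩
      omega
    · intro i
      have h2 : h / 2 = k := by omega
      rcases Nat.le_one_iff_eq_zero_or_eq_one.mp (ha i) with h0 | h0 <;>
        simp [h0, h2] <;> push_cast <;> omega
  refine ⟨key1, key2, ?_, ?_⟩
  · intro Q hQ
    rw [Finset.card_le_one]
    intro q1 h1 q2 h2
    by_contra hne
    rw [Finset.mem_filter] at h1 h2
    obtain ⟨hq1, a, ha, rfl⟩ := h1
    obtain ⟨hq2, b, hb, rfl⟩ := h2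
    exact hQ.2 _ hq1 _ hq2 hne (key1 a b ha hb (fun hab => hne (by rw [hab])))
  · intro heven Q hQ
    rw [Finset.card_le_one]
    intro q1 h1 q2 h2
    by_contra hne
    rw [Finset.mem_filter] at h1 h2
    obtain ⟨hq1, hc1⟩ := h1
    obtain ⟨hq2, hc2⟩ := h2
    rcases hc1 with rfl | ⟨a, ha, rfl⟩ <;> rcases hc2 with hc2 | ⟨b, hb, hq2e⟩
    · exact hne (by rw [hc2])
    · subst hq2e
      exact hQ.2 _ hq1 _ hq2 hne (key2 heven b hb)
    · subst hc2
      exact hQ.2 _ hq2 _ hq1 (Ne.symm hne) (key2 heven a ha)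
    · subst hq2e
      exact hQ.2 _ hq1 _ hq2 hne (key1 a b ha hb (fun hab => hne (by rw [hab])))
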